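/- Let ρ be a finite Borel measure on ℝ^d satisfying the Prékopa–Leindler property. Then the Prékopa–Leindler inequality also holds for Borel test functions: for all s, t ≥ 0 with s + t = 1 and all nonnegative Borel measurable functions a, b, c on ℝ^d such that a(s·x + t·y) ≥ b(x)^s · c(y)^t for all x, y ∈ ℝ^d, one has ∫ a dρ ≥ (∫ b dρ)^s · (∫ c dρ)^t. -/

import Mathlib

open MeasureTheory Pointwise ENNReal

noncomputable section

/-- A nonnegative function is log-concave if `f x ^ s * f y ^ t ≤ f (s • x + t • y)`
for all `x, y` and all `s, t ≥ 0` with `s + t = 1`. -/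
def IsLogConcave {E : Type*} [AddCommGroup E] [Module ℝ E] (f : E → ℝ) : Prop :=
  ∀ x y : E, ∀ s t : ℝ, 0 ≤ s → 0 ≤ t → s + t = 1 →
    f x ^ s * f y ^ t ≤ f (s • x + t • y)

/-- The Prékopa–Leindler property of a measure, tested on nonnegative continuous
compactly supported functions. -/
def PrekopaLeindler {E : Type*} [AddCommGroup E] [Module ℝ E] [TopologicalSpace E]
    [MeasurableSpace E] (ρ : Measure E) : Prop :=
  ∀ s t : ℝ, 0 ≤ s → 0 ≤ t → s + t = 1 →
    ∀ a b c : E → ℝ, Continuous a → Continuous b → Continuous c →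
      HasCompactSupport a → HasCompactSupport b → HasCompactSupport c →
      (∀ x, 0 ≤ a x) → (∀ x, 0 ≤ b x) → (∀ x, 0 ≤ c x) →
      (∀ x y, b x ^ s * c y ^ t ≤ a (s • x + t • y)) →
      (∫ x, b x ∂ρ) ^ s * (∫ x, c x ∂ρ) ^ t ≤ ∫ x, a x ∂ρ



section Helpers

open Set


variable {s t : ℝ}

/-- weighted AM-GM in ℝ≥0∞ -/
lemma amgm_ennreal (hs : 0 < s) (ht : 0 < t) (hst : s + t = 1) (P Q : ℝ≥0∞) :
    P ^ s * Q ^ t ≤ ENNReal.ofReal s * P + ENNReal.ofReal t * Q := by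
  rcases eq_or_ne P ∞ with rfl | hP
  · have : ENNReal.ofReal s * ∞ = ∞ := by
      simp [ENNReal.mul_top, ENNReal.ofReal_eq_zero, not_le.2 hs]
    simp [this]
  rcases eq_or_ne Q ∞ with rfl | hQ
  · have : ENNReal.ofReal t * ∞ = ∞ := by
      simp [ENNReal.mul_top, ENNReal.ofReal_eq_zero, not_le.2 ht]
    simp [this]
  lift P to NNReal using hP
  lift Q to NNReal using hQ
  have hsn : ENNReal.ofReal s = (s.toNNReal : ℝ≥0∞) := rfl
  have htn : ENNReal.ofReal t = (t.toNNReal : ℝ≥0∞) := rfl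
  rw [hsn, htn, ← ENNReal.coe_rpow_of_nonneg _ hs.le, ← ENNReal.coe_rpow_of_nonneg _ ht.le,
    ← ENNReal.coe_mul, ← ENNReal.coe_mul, ← ENNReal.coe_mul, ← ENNReal.coe_add, ENNReal.coe_le_coe]
  have key := NNReal.geom_mean_le_arith_mean2_weighted s.toNNReal t.toNNReal P Q ?_
  · convert key using 3 <;> simp [Real.coe_toNNReal, hs.le, ht.le]
  · have : (s.toNNReal : ℝ) + (t.toNNReal : ℝ) = 1 := by
      simp [Real.coe_toNNReal, hs.le, ht.le, hst]
    exact_mod_cast this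

/-- limit helper : monotone approximations -/
lemma rpow_mul_le_of_forall (hs : 0 < s) (ht : 0 < t) {P Q : ℕ → ℝ≥0∞} {Z : ℝ≥0∞}
    (hPm : Monotone P) (hQm : Monotone Q)
    (hle : ∀ n, P n ^ s * Q n ^ t ≤ Z) :
    (⨆ n, P n) ^ s * (⨆ n, Q n) ^ t ≤ Z := by
  set X := ⨆ n, P n
  set Y := ⨆ n, Q n
  rcases eq_or_ne X 0 with hX | hX
  · rw [hX, ENNReal.zero_rpow_of_pos hs, zero_mul]; exact zero_le
  rcases eq_or_ne Y 0 with hY | hY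
  · rw [hY, ENNReal.zero_rpow_of_pos ht, mul_zero]; exact zero_le
  have h1 : Filter.Tendsto P Filter.atTop (nhds X) := tendsto_atTop_iSup hPm
  have h2 : Filter.Tendsto Q Filter.atTop (nhds Y) := tendsto_atTop_iSup hQm
  have hXs : X ^ s ≠ 0 := by
    rw [Ne, ENNReal.rpow_eq_zero_iff]
    rintro (⟨h0, -⟩ | ⟨-, hneg⟩)
    exacts [hX h0, absurd hneg (not_lt.2 hs.le)]
  have hYt : Y ^ t ≠ 0 := by
    rw [Ne, ENNReal.rpow_eq_zero_iff]
    rintro (⟨h0, -⟩ | ⟨-, hneg⟩)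
    exacts [hY h0, absurd hneg (not_lt.2 ht.le)]
  have h3 : Filter.Tendsto (fun n => P n ^ s * Q n ^ t) Filter.atTop (nhds (X ^ s * Y ^ t)) :=
    ENNReal.Tendsto.mul (h1.ennrpow_const s) (Or.inl hXs) (h2.ennrpow_const t) (Or.inl hYt)
  exact le_of_tendsto h3 (Filter.Eventually.of_forall hle)

/-- 1-D Brunn-Minkowski for nonempty compact sets -/
lemma oneDim_BM {K L : Set ℝ} (hK : IsCompact K) (hL : IsCompact L)
    (hKne : K.Nonempty) (hLne : L.Nonempty) :
    volume K + volume L ≤ volume (K + L) := by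
  set x := sSup K
  set y := sInf L
  have hxK : x ∈ K := hK.sSup_mem hKne
  have hyL : y ∈ L := hL.sInf_mem hLne
  set A₁ : Set ℝ := y +ᵥ K
  set A₂ : Set ℝ := x +ᵥ L
  have hA1 : A₁ ⊆ K + L := by
    rintro z ⟨k, hk, rfl⟩
    exact ⟨k, hk, y, hyL, by simp [vadd_eq_add, add_comm]⟩
  have hA2 : A₂ ⊆ K + L := by
    rintro z ⟨l, hl, rfl⟩
    exact ⟨x, hxK, l, hl, by simp [vadd_eq_add]⟩
  have h1 : A₁ \ {x + y} ⊆ Iio (x + y) := by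
    rintro z ⟨⟨k, hk, rfl⟩, hz⟩
    have hkx : k ≤ x := le_csSup hK.bddAbove hk
    have hkne : k ≠ x := fun h => hz (by simp [vadd_eq_add, h, add_comm])
    have hklt : k < x := lt_of_le_of_ne hkx hkne
    simp only [vadd_eq_add, mem_Iio]
    linarith
  have h2 : A₂ ⊆ Ici (x + y) := by
    rintro z ⟨l, hl, rfl⟩
    have : y ≤ l := csInf_le hL.bddBelow hl
    simp only [vadd_eq_add, mem_Ici]
    linarith
  have hdisj : Disjoint (A₁ \ {x + y}) A₂ :=
    Disjoint.mono h1 h2 (by simp [Set.disjoint_left])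
  have hA2m : MeasurableSet A₂ := (hL.vadd x).measurableSet
  calc volume K + volume L = volume (A₁ \ {x + y}) + volume A₂ := by
        rw [measure_diff_null (measure_singleton _), measure_vadd, measure_vadd]
      _ = volume ((A₁ \ {x + y}) ∪ A₂) := (measure_union hdisj hA2m).symm
      _ ≤ volume (K + L) := measure_mono (union_subset (fun z hz => hA1 hz.1) hA2)


/-- generic layer cake for finite-valued ENNReal functions -/
lemma layercake_ennreal {α : Type*} [MeasurableSpace α] (μ : Measure α) {φ : α → ℝ≥0∞}
    (mφ : Measurable φ) (hφ : ∀ x, φ x ≠ ∞) :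
    ∫⁻ x, φ x ∂μ = ∫⁻ u in Ioi (0:ℝ), μ {x | ENNReal.ofReal u < φ x} := by
  have h1 : ∫⁻ x, φ x ∂μ = ∫⁻ x, ENNReal.ofReal ((φ x).toReal) ∂μ :=
    lintegral_congr fun x => (ENNReal.ofReal_toReal (hφ x)).symm
  rw [h1, lintegral_eq_lintegral_meas_lt μ (Filter.Eventually.of_forall fun x => ENNReal.toReal_nonneg)
    (ENNReal.measurable_toReal.comp mφ).aemeasurable]
  refine setLIntegral_congr_fun measurableSet_Ioi (fun u hu => ?_)
  congr 1
  ext x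
  simp only [mem_setOf_eq]
  rw [← ENNReal.ofReal_lt_iff_lt_toReal (le_of_lt hu) (hφ x)]

/-- substitution u = exp x for lintegrals over (0,∞) -/
lemma lintegral_Ioi_eq_exp (ψ : ℝ → ℝ≥0∞) :
    ∫⁻ u in Ioi (0:ℝ), ψ u = ∫⁻ x, ENNReal.ofReal (Real.exp x) * ψ (Real.exp x) := by
  have himg : Real.exp '' univ = Ioi (0:ℝ) := by
    rw [Set.image_univ, Real.range_exp]
  have hderiv : ∀ x ∈ (univ : Set ℝ),
      HasFDerivWithinAt Real.exp ((1 : ℝ →L[ℝ] ℝ).smulRight (Real.exp x)) univ x := fun x _ =>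
    ((Real.hasDerivAt_exp x).hasFDerivAt).hasFDerivWithinAt
  have hinj : InjOn Real.exp univ := Real.exp_injective.injOn
  have := lintegral_image_eq_lintegral_abs_det_fderiv_mul volume MeasurableSet.univ hderiv hinj ψ
  rw [himg] at this
  rw [this, setLIntegral_univ]
  refine lintegral_congr fun x => ?_
  rw [ContinuousLinearMap.smulRight_one_eq_toSpanSingleton, ContinuousLinearMap.det_toSpanSingleton, abs_of_pos (Real.exp_pos x)]

/-- substitution u = r * w for lintegrals over (0,∞), r > 0 -/
lemma lintegral_Ioi_scale {r : ℝ} (hr : 0 < r) (ψ : ℝ → ℝ≥0∞) :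
    ∫⁻ u in Ioi (0:ℝ), ψ u = ENNReal.ofReal r * ∫⁻ w in Ioi (0:ℝ), ψ (r * w) := by
  have himg : (fun w => r * w) '' Ioi (0:ℝ) = Ioi (0:ℝ) := by
    ext z
    simp only [mem_image, mem_Ioi]
    constructor
    · rintro ⟨w, hw, rfl⟩; positivity
    · intro hz; exact ⟨z / r, by positivity, by field_simp⟩
  have hderiv : ∀ x ∈ Ioi (0:ℝ),
      HasFDerivWithinAt (fun w => r * w) ((1 : ℝ →L[ℝ] ℝ).smulRight r) (Ioi (0:ℝ)) x := by
    intro x _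
    have : HasDerivAt (fun w => r * w) r x := by
      simpa [mul_comm] using (hasDerivAt_mul_const (x := x) r)
    exact this.hasFDerivAt.hasFDerivWithinAt
  have hinj : InjOn (fun w => r * w) (Ioi (0:ℝ)) :=
    fun a _ b _ hab => by
      field_simp at hab
      exact hab
  have := lintegral_image_eq_lintegral_abs_det_fderiv_mul volume measurableSet_Ioi hderiv hinj ψ
  rw [himg] at this
  rw [this]
  rw [← lintegral_const_mul' _ _ ENNReal.ofReal_ne_top]
  refine setLIntegral_congr_fun measurableSet_Ioi (fun w _ => ?_)
  rw [ContinuousLinearMap.smulRight_one_eq_toSpanSingleton, ContinuousLinearMap.det_toSpanSingleton, abs_of_pos hr]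


/-- finiteness of level-set volume for functions dominated by C·eˣ vanishing beyond R -/
lemma level_finite {F : ℝ → ℝ≥0∞} {C : ℝ≥0∞} (hC : C ≠ ∞) {R : ℝ}
    (hFle : ∀ x, F x ≤ C * ENNReal.ofReal (Real.exp x))
    (hFR : ∀ x, R ≤ x → F x = 0) {u : ℝ} (hu : 0 < u) (hC0 : C ≠ 0) :
    volume {x | ENNReal.ofReal u < F x} ≠ ∞ := by
  have hCt : 0 < C.toReal := ENNReal.toReal_pos hC0 hC
  have hsub : {x | ENNReal.ofReal u < F x} ⊆ Icc (Real.log (u / C.toReal)) R := by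
    intro x hx
    simp only [mem_setOf_eq] at hx
    constructor
    · have h1 : ENNReal.ofReal u < ENNReal.ofReal (C.toReal * Real.exp x) := by
        refine lt_of_lt_of_le hx (le_of_le_of_eq (hFle x) ?_)
        rw [ENNReal.ofReal_mul hCt.le, ENNReal.ofReal_toReal hC]
      have h2 : u < C.toReal * Real.exp x :=
        (ENNReal.ofReal_lt_ofReal_iff_of_nonneg hu.le).1 h1
      have h3 : u / C.toReal < Real.exp x := by
        rw [div_lt_iff₀ hCt]; linarith [mul_comm (Real.exp x) C.toReal]
      calc Real.log (u / C.toReal) ≤ Real.log (Real.exp x) :=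
            Real.log_le_log (by positivity) h3.le
        _ = x := Real.log_exp x
    · by_contra hxR
      push_neg at hxR
      rw [hFR x hxR.le] at hx
      exact absurd hx (by simp)
  exact (lt_of_le_of_lt (measure_mono hsub) measure_Icc_lt_top).ne

/-- Ioi-to-Ioo reduction when the integrand vanishes on [1,∞) -/
lemma lintegral_Ioi_eq_Ioo {φ : ℝ → ℝ≥0∞} (hφ : ∀ w, 1 ≤ w → φ w = 0) :
    ∫⁻ w in Ioi (0:ℝ), φ w = ∫⁻ w in Ioo (0:ℝ) 1, φ w := by
  have hsplit : Ioi (0:ℝ) = Ioo (0:ℝ) 1 ∪ Ici (1:ℝ) := by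
    ext w
    simp only [mem_Ioi, mem_union, mem_Ioo, mem_Ici]
    constructor
    · intro hw
      rcases lt_or_ge w 1 with h | h
      · exact Or.inl ⟨hw, h⟩
      · exact Or.inr h
    · rintro (⟨h1, -⟩ | h1) <;> linarith
  rw [hsplit, lintegral_union measurableSet_Ici (by
    simp only [Set.disjoint_left, mem_Ioo, mem_Ici]
    rintro w ⟨-, h1⟩ h2; linarith)]
  have : ∫⁻ w in Ici (1:ℝ), φ w = 0 := by
    rw [setLIntegral_congr_fun measurableSet_Ici
      (fun w hw => hφ w hw)]
    simp
  rw [this, add_zero]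

-- main one-dimensional core
lemma oneDimPL {s t : ℝ} (hs : 0 < s) (ht : 0 < t) (hst : s + t = 1)
    {F G H : ℝ → ℝ≥0∞} (mF : Measurable F) (mG : Measurable G) (mH : Measurable H)
    {C : ℝ≥0∞} (hC : C ≠ ∞) {R : ℝ}
    (hFle : ∀ x, F x ≤ C * ENNReal.ofReal (Real.exp x))
    (hGle : ∀ x, G x ≤ C * ENNReal.ofReal (Real.exp x))
    (hHle : ∀ x, H x ≤ C * ENNReal.ofReal (Real.exp x))
    (hFR : ∀ x, R ≤ x → F x = 0) (hGR : ∀ x, R ≤ x → G x = 0)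
    (hyp : ∀ x y, F x ^ s * G y ^ t ≤ H (s * x + t * y)) :
    (∫⁻ x, F x) ^ s * (∫⁻ x, G x) ^ t ≤ ∫⁻ x, H x := by
  classical
  -- suprema
  set β := ⨆ x, F x with hβ
  set γ := ⨆ x, G x with hγ
  have hβle : β ≤ C * ENNReal.ofReal (Real.exp R) := by
    refine iSup_le fun x => ?_
    rcases le_or_gt R x with hxR | hxR
    · rw [hFR x hxR]; exact zero_le
    · exact le_trans (hFle x) (mul_le_mul_right
        (ENNReal.ofReal_le_ofReal (Real.exp_le_exp.2 hxR.le)) C)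
  have hγle : γ ≤ C * ENNReal.ofReal (Real.exp R) := by
    refine iSup_le fun x => ?_
    rcases le_or_gt R x with hxR | hxR
    · rw [hGR x hxR]; exact zero_le
    · exact le_trans (hGle x) (mul_le_mul_right
        (ENNReal.ofReal_le_ofReal (Real.exp_le_exp.2 hxR.le)) C)
  have hβtop : β ≠ ∞ := (lt_of_le_of_lt hβle
    (ENNReal.mul_lt_top hC.lt_top ENNReal.ofReal_lt_top)).ne
  have hγtop : γ ≠ ∞ := (lt_of_le_of_lt hγle
    (ENNReal.mul_lt_top hC.lt_top ENNReal.ofReal_lt_top)).ne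
  rcases eq_or_ne β 0 with hβ0 | hβ0
  · have hF0 : ∀ x, F x = 0 := fun x =>
      le_antisymm (le_trans (le_iSup F x) hβ0.le) (zero_le)
    have : ∫⁻ x, F x = 0 := by simp [hF0]
    rw [this, ENNReal.zero_rpow_of_pos hs, zero_mul]
    exact zero_le
  rcases eq_or_ne γ 0 with hγ0 | hγ0
  · have hG0 : ∀ x, G x = 0 := fun x =>
      le_antisymm (le_trans (le_iSup G x) hγ0.le) (zero_le)
    have : ∫⁻ x, G x = 0 := by simp [hG0]
    rw [this, ENNReal.zero_rpow_of_pos ht, mul_zero]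
    exact zero_le
  have hC0 : C ≠ 0 := by
    rintro rfl
    exact hβ0 (le_antisymm (by simpa using hβle) (zero_le))
  set b₀ := β.toReal with hb₀def
  set c₀ := γ.toReal with hc₀def
  have hb₀ : 0 < b₀ := ENNReal.toReal_pos hβ0 hβtop
  have hc₀ : 0 < c₀ := ENNReal.toReal_pos hγ0 hγtop
  have hβeq : β = ENNReal.ofReal b₀ := (ENNReal.ofReal_toReal hβtop).symm
  have hγeq : γ = ENNReal.ofReal c₀ := (ENNReal.ofReal_toReal hγtop).symm
  set d₀ := b₀ ^ s * c₀ ^ t with hd₀def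
  have hd₀ : 0 < d₀ := by positivity
  -- level functions
  set ΦF : ℝ → ℝ≥0∞ := fun u => volume {x | ENNReal.ofReal u < F x} with hΦF
  set ΦG : ℝ → ℝ≥0∞ := fun u => volume {x | ENNReal.ofReal u < G x} with hΦG
  set ΦH : ℝ → ℝ≥0∞ := fun u => volume {x | ENNReal.ofReal u < H x} with hΦH
  -- key inequality
  have key : ∀ w : ℝ, w ∈ Ioo (0:ℝ) 1 →
      ENNReal.ofReal s * ΦF (b₀ * w) + ENNReal.ofReal t * ΦG (c₀ * w) ≤ ΦH (d₀ * w) := by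
    rintro w ⟨hw0, hw1⟩
    apply ENNReal.le_of_forall_pos_le_add
    intro ε hε _
    have hwb : 0 < b₀ * w := by positivity
    have hwc : 0 < c₀ * w := by positivity
    -- witnesses
    have hxw : ∃ x, ENNReal.ofReal (b₀ * w) < F x := by
      rw [← lt_iSup_iff, ← hβ]
      rw [hβeq]
      exact ENNReal.ofReal_lt_ofReal_iff_of_nonneg (by positivity) |>.2
        (by nlinarith)
    have hyw : ∃ y, ENNReal.ofReal (c₀ * w) < G y := by
      rw [← lt_iSup_iff, ← hγ]
      rw [hγeq]
      exact ENNReal.ofReal_lt_ofReal_iff_of_nonneg (by positivity) |>.2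
        (by nlinarith)
    obtain ⟨x₀, hx₀⟩ := hxw
    obtain ⟨y₀, hy₀⟩ := hyw
    set A := {x | ENNReal.ofReal (b₀ * w) < F x} with hAdef
    set B := {x | ENNReal.ofReal (c₀ * w) < G x} with hBdef
    have hAm : MeasurableSet A := mF measurableSet_Ioi
    have hBm : MeasurableSet B := mG measurableSet_Ioi
    have hAfin : volume A ≠ ∞ := level_finite hC hFle hFR hwb hC0
    have hBfin : volume B ≠ ∞ := level_finite hC hGle hGR hwc hC0
    obtain ⟨K, hKA, hKc, hKlt⟩ := hAm.exists_isCompact_lt_add hAfin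
      (ε := (ε:ℝ≥0∞)/2) (by simp [hε.ne', ENNReal.div_eq_top])
    obtain ⟨L, hLB, hLc, hLlt⟩ := hBm.exists_isCompact_lt_add hBfin
      (ε := (ε:ℝ≥0∞)/2) (by simp [hε.ne', ENNReal.div_eq_top])
    set K' := insert x₀ K with hK'def
    set L' := insert y₀ L with hL'def
    have hK'c : IsCompact K' := hKc.insert x₀
    have hL'c : IsCompact L' := hLc.insert y₀
    have hK'A : K' ⊆ A := insert_subset hx₀ hKA
    have hL'B : L' ⊆ B := insert_subset hy₀ hLB
    -- inclusion into H level set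
    have hincl : s • K' + t • L' ⊆ {z | ENNReal.ofReal (d₀ * w) < H z} := by
      rintro z ⟨p, hp, q, hq, rfl⟩
      obtain ⟨x, hxK, rfl⟩ := hp
      obtain ⟨y, hyL, rfl⟩ := hq
      have hbx : ENNReal.ofReal (b₀ * w) < F x := hK'A hxK
      have hcy : ENNReal.ofReal (c₀ * w) < G y := hL'B hyL
      have heq : (b₀ * w) ^ s * ((c₀ * w) ^ t) = d₀ * w := by
        rw [Real.mul_rpow hb₀.le hw0.le, Real.mul_rpow hc₀.le hw0.le, hd₀def]
        rw [show b₀ ^ s * w ^ s * (c₀ ^ t * w ^ t) = b₀ ^ s * c₀ ^ t * (w ^ s * w ^ t) by ring,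
          ← Real.rpow_add hw0, hst, Real.rpow_one]
      have : ENNReal.ofReal (d₀ * w) < F x ^ s * G y ^ t := by
        rw [← heq, ENNReal.ofReal_mul (Real.rpow_nonneg (by positivity) s),
          ← ENNReal.ofReal_rpow_of_pos hwb, ← ENNReal.ofReal_rpow_of_pos hwc]
        exact ENNReal.mul_lt_mul (ENNReal.rpow_lt_rpow hbx hs) (ENNReal.rpow_lt_rpow hcy ht)
      exact lt_of_lt_of_le this (hyp x y)
    -- 1-D Brunn-Minkowski
    have hsK : volume (s • K') = ENNReal.ofReal s * volume K' := by
      rw [Measure.addHaar_smul]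
      congr 2
      simp [abs_of_pos hs]
    have htL : volume (t • L') = ENNReal.ofReal t * volume L' := by
      rw [Measure.addHaar_smul]
      congr 2
      simp [abs_of_pos ht]
    have hBMcalc : volume (s • K') + volume (t • L') ≤ volume (s • K' + t • L') := by
      apply oneDim_BM
      · rw [← Set.image_smul]; exact hK'c.image (continuous_const_smul s)
      · rw [← Set.image_smul]; exact hL'c.image (continuous_const_smul t)
      · exact (insert_nonempty x₀ K).smul_set
      · exact (insert_nonempty y₀ L).smul_set
    calc ENNReal.ofReal s * ΦF (b₀ * w) + ENNReal.ofReal t * ΦG (c₀ * w)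
        ≤ ENNReal.ofReal s * (volume K + (ε:ℝ≥0∞)/2)
            + ENNReal.ofReal t * (volume L + (ε:ℝ≥0∞)/2) :=
          add_le_add (mul_le_mul_right hKlt.le _) (mul_le_mul_right hLlt.le _)
      _ ≤ (ENNReal.ofReal s * volume K' + ENNReal.ofReal t * volume L') + (ε:ℝ≥0∞) := by
          rw [mul_add, mul_add]
          have hsle : ENNReal.ofReal s ≤ 1 := by
            rw [← ENNReal.ofReal_one]; exact ENNReal.ofReal_le_ofReal (by linarith)
          have htle : ENNReal.ofReal t ≤ 1 := by
            rw [← ENNReal.ofReal_one]; exact ENNReal.ofReal_le_ofReal (by linarith)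
          have h1 : ENNReal.ofReal s * ((ε:ℝ≥0∞)/2) + ENNReal.ofReal t * ((ε:ℝ≥0∞)/2)
              ≤ (ε:ℝ≥0∞) := by
            calc ENNReal.ofReal s * ((ε:ℝ≥0∞)/2) + ENNReal.ofReal t * ((ε:ℝ≥0∞)/2)
                ≤ 1 * ((ε:ℝ≥0∞)/2) + 1 * ((ε:ℝ≥0∞)/2) :=
                  add_le_add (mul_le_mul_left hsle _) (mul_le_mul_left htle _)
              _ = (ε:ℝ≥0∞) := by simp [ENNReal.add_halves]
          have h2 : volume K ≤ volume K' := measure_mono (subset_insert x₀ K)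
          have h3 : volume L ≤ volume L' := measure_mono (subset_insert y₀ L)
          calc ENNReal.ofReal s * volume K + ENNReal.ofReal s * ((ε:ℝ≥0∞)/2)
                + (ENNReal.ofReal t * volume L + ENNReal.ofReal t * ((ε:ℝ≥0∞)/2))
              = (ENNReal.ofReal s * volume K + ENNReal.ofReal t * volume L)
                + (ENNReal.ofReal s * ((ε:ℝ≥0∞)/2) + ENNReal.ofReal t * ((ε:ℝ≥0∞)/2)) := by
                ring
            _ ≤ (ENNReal.ofReal s * volume K' + ENNReal.ofReal t * volume L') + (ε:ℝ≥0∞) :=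
                add_le_add (add_le_add (mul_le_mul_right h2 _) (mul_le_mul_right h3 _)) h1
      _ = (volume (s • K') + volume (t • L')) + (ε:ℝ≥0∞) := by rw [hsK, htL]
      _ ≤ volume (s • K' + t • L') + (ε:ℝ≥0∞) := add_le_add_left hBMcalc _
      _ ≤ ΦH (d₀ * w) + (ε:ℝ≥0∞) := add_le_add_left (measure_mono hincl) _
  -- measurability and antitonicity of level functions
  have hAntiF : Antitone (fun w => ΦF (b₀ * w)) := by
    intro u v huv
    exact measure_mono (fun x hx => lt_of_le_of_lt
      (ENNReal.ofReal_le_ofReal (by nlinarith)) hx)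
  have hAntiG : Antitone (fun w => ΦG (c₀ * w)) := by
    intro u v huv
    exact measure_mono (fun x hx => lt_of_le_of_lt
      (ENNReal.ofReal_le_ofReal (by nlinarith)) hx)
  -- layer cake representations
  have hFfin : ∀ x, F x ≠ ∞ := fun x =>
    (lt_of_le_of_lt (hFle x) (ENNReal.mul_lt_top hC.lt_top ENNReal.ofReal_lt_top)).ne
  have hGfin : ∀ x, G x ≠ ∞ := fun x =>
    (lt_of_le_of_lt (hGle x) (ENNReal.mul_lt_top hC.lt_top ENNReal.ofReal_lt_top)).ne
  have hHfin : ∀ x, H x ≠ ∞ := fun x =>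
    (lt_of_le_of_lt (hHle x) (ENNReal.mul_lt_top hC.lt_top ENNReal.ofReal_lt_top)).ne
  have PF : ∫⁻ x, F x = ∫⁻ u in Ioi (0:ℝ), ΦF u := layercake_ennreal volume mF hFfin
  have PG : ∫⁻ x, G x = ∫⁻ u in Ioi (0:ℝ), ΦG u := layercake_ennreal volume mG hGfin
  have PH : ∫⁻ x, H x = ∫⁻ u in Ioi (0:ℝ), ΦH u := layercake_ennreal volume mH hHfin
  -- vanishing beyond 1
  have hFvan : ∀ w, 1 ≤ w → ΦF (b₀ * w) = 0 := by
    intro w hw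
    have hempty : {x | ENNReal.ofReal (b₀ * w) < F x} = ∅ := by
      refine eq_empty_iff_forall_notMem.2 fun x hx => ?_
      have h1 : F x ≤ ENNReal.ofReal (b₀ * w) := by
        refine le_trans (le_iSup F x) (le_trans (le_of_eq hβeq) ?_)
        exact ENNReal.ofReal_le_ofReal (by nlinarith)
      exact absurd hx (not_lt.2 h1)
    simp only [hΦF]
    rw [hempty, measure_empty]
  have hGvan : ∀ w, 1 ≤ w → ΦG (c₀ * w) = 0 := by
    intro w hw
    have hempty : {x | ENNReal.ofReal (c₀ * w) < G x} = ∅ := by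
      refine eq_empty_iff_forall_notMem.2 fun x hx => ?_
      have h1 : G x ≤ ENNReal.ofReal (c₀ * w) := by
        refine le_trans (le_iSup G x) (le_trans (le_of_eq hγeq) ?_)
        exact ENNReal.ofReal_le_ofReal (by nlinarith)
      exact absurd hx (not_lt.2 h1)
    simp only [hΦG]
    rw [hempty, measure_empty]
  -- integral abbreviations
  set P := ∫⁻ x, F x with hP
  set Q := ∫⁻ x, G x with hQ
  set JF := ∫⁻ w in Ioi (0:ℝ), ΦF (b₀ * w) with hJF
  set JG := ∫⁻ w in Ioi (0:ℝ), ΦG (c₀ * w) with hJG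
  have hscaleF : P = ENNReal.ofReal b₀ * JF := by rw [PF]; exact lintegral_Ioi_scale hb₀ ΦF
  have hscaleG : Q = ENNReal.ofReal c₀ * JG := by rw [PG]; exact lintegral_Ioi_scale hc₀ ΦG
  have hb₀ne : ENNReal.ofReal b₀ ≠ 0 := (ENNReal.ofReal_pos.2 hb₀).ne'
  have hc₀ne : ENNReal.ofReal c₀ ≠ 0 := (ENNReal.ofReal_pos.2 hc₀).ne'
  have hJFeq : JF = (ENNReal.ofReal b₀)⁻¹ * P := by
    rw [hscaleF, ← mul_assoc, ENNReal.inv_mul_cancel hb₀ne ENNReal.ofReal_ne_top, one_mul]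
  have hJGeq : JG = (ENNReal.ofReal c₀)⁻¹ * Q := by
    rw [hscaleG, ← mul_assoc, ENNReal.inv_mul_cancel hc₀ne ENNReal.ofReal_ne_top, one_mul]
  have hIooF : JF = ∫⁻ w in Ioo (0:ℝ) 1, ΦF (b₀ * w) := lintegral_Ioi_eq_Ioo hFvan
  have hIooG : JG = ∫⁻ w in Ioo (0:ℝ) 1, ΦG (c₀ * w) := lintegral_Ioi_eq_Ioo hGvan
  -- main integrated inequality
  have big : ENNReal.ofReal s * JF + ENNReal.ofReal t * JG
      ≤ ∫⁻ w in Ioo (0:ℝ) 1, ΦH (d₀ * w) := by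
    rw [hIooF, hIooG, ← lintegral_const_mul' _ _ ENNReal.ofReal_ne_top,
      ← lintegral_const_mul' _ _ ENNReal.ofReal_ne_top,
      ← lintegral_add_left (hAntiF.measurable.const_mul _)]
    exact setLIntegral_mono' measurableSet_Ioo key
  -- assemble
  calc P ^ s * Q ^ t
      = (ENNReal.ofReal b₀ * JF) ^ s * (ENNReal.ofReal c₀ * JG) ^ t := by
        rw [← hscaleF, ← hscaleG]
    _ = ENNReal.ofReal d₀ * (JF ^ s * JG ^ t) := by
        rw [ENNReal.mul_rpow_of_nonneg _ _ hs.le, ENNReal.mul_rpow_of_nonneg _ _ ht.le,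
          hd₀def, ENNReal.ofReal_mul (Real.rpow_nonneg hb₀.le s),
          ← ENNReal.ofReal_rpow_of_pos hb₀, ← ENNReal.ofReal_rpow_of_pos hc₀]
        ring
    _ ≤ ENNReal.ofReal d₀ * (ENNReal.ofReal s * JF + ENNReal.ofReal t * JG) :=
        mul_le_mul_right (amgm_ennreal hs ht hst JF JG) _
    _ ≤ ENNReal.ofReal d₀ * ∫⁻ w in Ioo (0:ℝ) 1, ΦH (d₀ * w) := mul_le_mul_right big _
    _ ≤ ENNReal.ofReal d₀ * ∫⁻ w in Ioi (0:ℝ), ΦH (d₀ * w) :=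
        mul_le_mul_right (lintegral_mono_set Ioo_subset_Ioi_self) _
    _ = ∫⁻ u in Ioi (0:ℝ), ΦH u := (lintegral_Ioi_scale hd₀ ΦH).symm
    _ = ∫⁻ x, H x := PH.symm



variable {d : ℕ}

local notation "E" => EuclideanSpace ℝ (Fin d)


/-- bump function -/
noncomputable def bump (S : Set E) (δ : ℝ) (x : E) : ℝ := max (1 - Metric.infDist x S / δ) 0

lemma bump_continuous {S : Set E} {δ : ℝ} : Continuous (bump S δ) :=
  (continuous_const.sub ((Metric.continuous_infDist_pt S).div_const δ)).max continuous_const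

lemma bump_nonneg {S : Set E} {δ : ℝ} (x : E) : 0 ≤ bump S δ x := le_max_right _ _

lemma bump_le_one {S : Set E} {δ : ℝ} (hδ : 0 < δ) (x : E) : bump S δ x ≤ 1 :=
  max_le (by
    have := Metric.infDist_nonneg (s := S) (x := x)
    have : 0 ≤ Metric.infDist x S / δ := by positivity
    linarith) zero_le_one

lemma bump_eq_one {S : Set E} {δ : ℝ} {x : E} (hx : x ∈ S) : bump S δ x = 1 := by
  simp [bump, Metric.infDist_zero_of_mem hx]

lemma bump_pos_infDist {S : Set E} {δ : ℝ} (hδ : 0 < δ) {x : E} (hx : 0 < bump S δ x) :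
    Metric.infDist x S < δ := by
  rcases lt_max_iff.1 hx with h | h
  · have : Metric.infDist x S / δ < 1 := by linarith
    exact (div_lt_one hδ).1 this
  · exact absurd h (lt_irrefl 0)

lemma bump_hcs {S : Set E} {δ : ℝ} (hδ : 0 < δ) (hS : IsCompact S) (hSne : S.Nonempty) :
    HasCompactSupport (bump S δ) := by
  apply HasCompactSupport.intro (hS.cthickening)
  intro x hx
  rw [bump, max_eq_right]
  have : ¬ Metric.infDist x S < δ := by
    intro hlt
    exact hx (Metric.thickening_subset_cthickening δ S
      ((Metric.mem_thickening_iff_infDist_lt hSne).2 hlt))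
  push_neg at this
  have h2 : 1 ≤ Metric.infDist x S / δ := (le_div_iff₀ hδ).2 (by linarith)
  linarith

/-- Step 1: multiplicative Brunn-Minkowski for compact sets -/
lemma step1 (ρ : Measure E) [IsFiniteMeasure ρ] (h : PrekopaLeindler ρ)
    {s t : ℝ} (hs : 0 < s) (ht : 0 < t) (hst : s + t = 1)
    {K L : Set E} (hK : IsCompact K) (hL : IsCompact L) :
    ρ K ^ s * ρ L ^ t ≤ ρ (s • K + t • L) := by
  rcases K.eq_empty_or_nonempty with rfl | hKne
  · simp [ENNReal.zero_rpow_of_pos hs]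
  rcases L.eq_empty_or_nonempty with rfl | hLne
  · simp [ENNReal.zero_rpow_of_pos ht]
  set S := s • K + t • L with hSdef
  have hScomp : IsCompact S := by
    apply IsCompact.add
    · rw [← Set.image_smul]; exact hK.image (continuous_const_smul s)
    · rw [← Set.image_smul]; exact hL.image (continuous_const_smul t)
  have hSne : S.Nonempty := by
    obtain ⟨k, hk⟩ := hKne; obtain ⟨l, hl⟩ := hLne
    exact ⟨s • k + t • l, add_mem_add (smul_mem_smul_set hk) (smul_mem_smul_set hl)⟩
  -- key inequality for every δ > 0
  have key : ∀ δ : ℝ, 0 < δ →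
      (ρ K).toReal ^ s * (ρ L).toReal ^ t ≤ (ρ (Metric.cthickening (2*δ) S)).toReal := by
    intro δ hδ
    set bK := bump K δ
    set bL := bump L δ
    set aS : E → ℝ := fun z => min 1 (max (2 - Metric.infDist z S / δ) 0) with haSdef
    have haS_cont : Continuous aS :=
      continuous_const.min
        ((continuous_const.sub ((Metric.continuous_infDist_pt S).div_const δ)).max continuous_const)
    have haS_nonneg : ∀ z, 0 ≤ aS z := fun z => le_min zero_le_one (le_max_right _ _)
    have haS_le_one : ∀ z, aS z ≤ 1 := fun z => min_le_left _ _
    have haS_zero : ∀ z, z ∉ Metric.cthickening (2*δ) S → aS z = 0 := by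
      intro z hz
      have : ¬ Metric.infDist z S < 2*δ := by
        intro hlt
        exact hz (Metric.thickening_subset_cthickening _ S
          ((Metric.mem_thickening_iff_infDist_lt hSne).2 hlt))
      push_neg at this
      have h2 : 2 ≤ Metric.infDist z S / δ := by
        rw [le_div_iff₀ hδ]; linarith
      simp only [haSdef]
      rw [max_eq_right (by linarith)]
      exact min_eq_right zero_le_one
    have haS_one : ∀ z, Metric.infDist z S < δ → aS z = 1 := by
      intro z hz
      have h1 : Metric.infDist z S / δ < 1 := (div_lt_one hδ).2 hz
      simp only [haSdef]
      rw [max_eq_left (by linarith), min_eq_left (by linarith)]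
    have haS_hcs : HasCompactSupport aS :=
      HasCompactSupport.intro hScomp.cthickening haS_zero
    -- pointwise hypothesis
    have hpoint : ∀ x y : E, bK x ^ s * bL y ^ t ≤ aS (s • x + t • y) := by
      intro x y
      rcases eq_or_lt_of_le (show (0:ℝ) ≤ bK x from bump_nonneg x) with hx0 | hxpos
      · rw [← hx0, Real.zero_rpow hs.ne', zero_mul]; exact haS_nonneg _
      rcases eq_or_lt_of_le (show (0:ℝ) ≤ bL y from bump_nonneg y) with hy0 | hypos
      · rw [← hy0, Real.zero_rpow ht.ne', mul_zero]; exact haS_nonneg _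
      have hdx := bump_pos_infDist hδ hxpos
      have hdy := bump_pos_infDist hδ hypos
      obtain ⟨k, hkK, hdk⟩ := hK.exists_infDist_eq_dist hKne x
      obtain ⟨l, hlL, hdl⟩ := hL.exists_infDist_eq_dist hLne y
      have hmem : s • k + t • l ∈ S := add_mem_add (smul_mem_smul_set hkK) (smul_mem_smul_set hlL)
      have hdist : dist (s • x + t • y) (s • k + t • l) < δ := by
        have hxk : dist x k < δ := by rw [← hdk]; exact hdx
        have hyl : dist y l < δ := by rw [← hdl]; exact hdy
        have hrw : (s • x + t • y) - (s • k + t • l) = s • (x - k) + t • (y - l) := by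
          module
        calc dist (s • x + t • y) (s • k + t • l)
            = ‖(s • x + t • y) - (s • k + t • l)‖ := dist_eq_norm _ _
          _ = ‖s • (x - k) + t • (y - l)‖ := by rw [hrw]
          _ ≤ ‖s • (x - k)‖ + ‖t • (y - l)‖ := norm_add_le _ _
          _ = s * dist x k + t * dist y l := by
              rw [norm_smul, norm_smul, Real.norm_eq_abs, Real.norm_eq_abs,
                abs_of_pos hs, abs_of_pos ht, dist_eq_norm, dist_eq_norm]
          _ < s * δ + t * δ := by
              exact add_lt_add (mul_lt_mul_of_pos_left hxk hs) (mul_lt_mul_of_pos_left hyl ht)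
          _ = δ := by rw [← add_mul, hst, one_mul]
      have hinf : Metric.infDist (s • x + t • y) S < δ :=
        lt_of_le_of_lt (Metric.infDist_le_dist_of_mem hmem) hdist
      rw [haS_one _ hinf]
      calc bK x ^ s * bL y ^ t ≤ 1 * 1 :=
            mul_le_mul (Real.rpow_le_one (bump_nonneg x) (bump_le_one hδ x) hs.le)
              (Real.rpow_le_one (bump_nonneg y) (bump_le_one hδ y) ht.le)
              (Real.rpow_nonneg (bump_nonneg y) t) zero_le_one
        _ = 1 := one_mul 1
    -- apply h
    have happ := h s t hs.le ht.le hst aS bK bL haS_cont bump_continuous bump_continuous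
      haS_hcs (bump_hcs hδ hK hKne) (bump_hcs hδ hL hLne)
      haS_nonneg bump_nonneg bump_nonneg hpoint
    -- integral bounds
    have hbK_int : Integrable bK ρ := bump_continuous.integrable_of_hasCompactSupport
      (bump_hcs hδ hK hKne)
    have hbL_int : Integrable bL ρ := bump_continuous.integrable_of_hasCompactSupport
      (bump_hcs hδ hL hLne)
    have haS_int : Integrable aS ρ := haS_cont.integrable_of_hasCompactSupport haS_hcs
    have hKlow : (ρ K).toReal ≤ ∫ x, bK x ∂ρ := by
      have hind : K.indicator (fun _ => (1:ℝ)) ≤ bK := by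
        intro x
        by_cases hx : x ∈ K
        · rw [indicator_of_mem hx]; exact le_of_eq (bump_eq_one hx).symm
        · rw [indicator_of_notMem hx]; exact bump_nonneg x
      calc (ρ K).toReal = ∫ x, K.indicator (fun _ => (1:ℝ)) x ∂ρ := by
            rw [integral_indicator_const (1:ℝ) hK.measurableSet, smul_eq_mul, mul_one, measureReal_def]
        _ ≤ ∫ x, bK x ∂ρ := integral_mono
            ((integrable_const (1:ℝ)).indicator hK.measurableSet) hbK_int hind
    have hLlow : (ρ L).toReal ≤ ∫ x, bL x ∂ρ := by
      have hind : L.indicator (fun _ => (1:ℝ)) ≤ bL := by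
        intro x
        by_cases hx : x ∈ L
        · rw [indicator_of_mem hx]; exact le_of_eq (bump_eq_one hx).symm
        · rw [indicator_of_notMem hx]; exact bump_nonneg x
      calc (ρ L).toReal = ∫ x, L.indicator (fun _ => (1:ℝ)) x ∂ρ := by
            rw [integral_indicator_const (1:ℝ) hL.measurableSet, smul_eq_mul, mul_one, measureReal_def]
        _ ≤ ∫ x, bL x ∂ρ := integral_mono
            ((integrable_const (1:ℝ)).indicator hL.measurableSet) hbL_int hind
    have haShigh : ∫ x, aS x ∂ρ ≤ (ρ (Metric.cthickening (2*δ) S)).toReal := by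
      have hind : aS ≤ (Metric.cthickening (2*δ) S).indicator (fun _ => (1:ℝ)) := by
        intro z
        by_cases hz : z ∈ Metric.cthickening (2*δ) S
        · rw [indicator_of_mem hz]; exact haS_le_one z
        · rw [indicator_of_notMem hz, haS_zero z hz]
      calc ∫ x, aS x ∂ρ ≤ ∫ x, (Metric.cthickening (2*δ) S).indicator (fun _ => (1:ℝ)) x ∂ρ :=
            integral_mono haS_int
              ((integrable_const (1:ℝ)).indicator
                (Metric.isClosed_cthickening).measurableSet) hind
        _ = (ρ (Metric.cthickening (2*δ) S)).toReal := by
            rw [integral_indicator_const (1:ℝ) (Metric.isClosed_cthickening).measurableSet,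
              smul_eq_mul, mul_one, measureReal_def]
    calc (ρ K).toReal ^ s * (ρ L).toReal ^ t
        ≤ (∫ x, bK x ∂ρ) ^ s * (∫ x, bL x ∂ρ) ^ t :=
          mul_le_mul (Real.rpow_le_rpow ENNReal.toReal_nonneg hKlow hs.le)
            (Real.rpow_le_rpow ENNReal.toReal_nonneg hLlow ht.le)
            (Real.rpow_nonneg ENNReal.toReal_nonneg t)
            (Real.rpow_nonneg (le_trans ENNReal.toReal_nonneg hKlow) s)
      _ ≤ ∫ x, aS x ∂ρ := happ
      _ ≤ (ρ (Metric.cthickening (2*δ) S)).toReal := haShigh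
  -- pass to the limit δ → 0
  have hreal : (ρ K).toReal ^ s * (ρ L).toReal ^ t ≤ (ρ S).toReal := by
    have htend0 : Filter.Tendsto (fun δ : ℝ => 2*δ) (nhdsWithin 0 (Ioi 0)) (nhds 0) := by
      have : Filter.Tendsto (fun δ : ℝ => 2*δ) (nhds 0) (nhds 0) := by
        exact (continuous_const.mul continuous_id).tendsto' (0:ℝ) 0 (by simp)
      exact this.mono_left nhdsWithin_le_nhds
    have htend1 : Filter.Tendsto (fun δ : ℝ => ρ (Metric.cthickening (2*δ) S))
        (nhdsWithin 0 (Ioi 0)) (nhds (ρ S)) :=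
      (tendsto_measure_cthickening_of_isClosed
        ⟨1, one_pos, measure_ne_top ρ _⟩ hScomp.isClosed).comp htend0
    have htend2 : Filter.Tendsto (fun δ : ℝ => (ρ (Metric.cthickening (2*δ) S)).toReal)
        (nhdsWithin 0 (Ioi 0)) (nhds (ρ S).toReal) :=
      (ENNReal.tendsto_toReal (measure_ne_top ρ S)).comp htend1
    refine ge_of_tendsto htend2 ?_
    filter_upwards [self_mem_nhdsWithin] with δ hδ
    exact key δ hδ
  -- convert to ENNReal
  have hfin1 : ρ K ^ s * ρ L ^ t ≠ ∞ :=
    ENNReal.mul_ne_top (ENNReal.rpow_ne_top_of_nonneg hs.le (measure_ne_top ρ K))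
      (ENNReal.rpow_ne_top_of_nonneg ht.le (measure_ne_top ρ L))
  rw [← ENNReal.toReal_le_toReal hfin1 (measure_ne_top ρ S)]
  rwa [ENNReal.toReal_mul, ← ENNReal.toReal_rpow, ← ENNReal.toReal_rpow]

/-- Step 2: levels. Assumes step1 as hypothesis hBM. -/
lemma step2 (ρ : Measure E) [IsFiniteMeasure ρ]
    {s t : ℝ} (hs : 0 < s) (ht : 0 < t) (hst : s + t = 1)
    (hBM : ∀ {K L : Set E}, IsCompact K → IsCompact L → ρ K ^ s * ρ L ^ t ≤ ρ (s • K + t • L))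
    {a b c : E → ℝ≥0∞} (ma : Measurable a) (mb : Measurable b) (mc : Measurable c)
    (hyp : ∀ x y, b x ^ s * c y ^ t ≤ a (s • x + t • y))
    {u v : ℝ} (hu : 0 < u) (hv : 0 < v) :
    ρ {x | ENNReal.ofReal u < b x} ^ s * ρ {x | ENNReal.ofReal v < c x} ^ t
      ≤ ρ {z | ENNReal.ofReal (u ^ s * v ^ t) < a z} := by
  set A := {x | ENNReal.ofReal u < b x} with hA
  set B := {x | ENNReal.ofReal v < c x} with hB
  set T := {z | ENNReal.ofReal (u ^ s * v ^ t) < a z} with hT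
  have hAm : MeasurableSet A := mb measurableSet_Ioi
  have hBm : MeasurableSet B := mc measurableSet_Ioi
  -- inclusion for compact subsets
  have hincl : ∀ K L : Set E, K ⊆ A → L ⊆ B → s • K + t • L ⊆ T := by
    rintro K L hKA hLB z ⟨p, hp, q, hq, rfl⟩
    obtain ⟨x, hxK, rfl⟩ := hp
    obtain ⟨y, hyL, rfl⟩ := hq
    have hbx : ENNReal.ofReal u < b x := hKA hxK
    have hcy : ENNReal.ofReal v < c y := hLB hyL
    have : ENNReal.ofReal (u ^ s * v ^ t) < b x ^ s * c y ^ t := by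
      rw [ENNReal.ofReal_mul (Real.rpow_nonneg hu.le s), ← ENNReal.ofReal_rpow_of_pos hu,
        ← ENNReal.ofReal_rpow_of_pos hv]
      exact ENNReal.mul_lt_mul (ENNReal.rpow_lt_rpow hbx hs) (ENNReal.rpow_lt_rpow hcy ht)
    exact lt_of_lt_of_le this (hyp x y)
  -- q < 1 trick
  apply ENNReal.le_of_forall_lt_one_mul_le
  intro q hq1
  rcases eq_or_ne q 0 with rfl | hq0
  · simp
  rcases eq_or_ne (ρ A) 0 with hA0 | hA0
  · rw [hA0, ENNReal.zero_rpow_of_pos hs, zero_mul, mul_zero]; exact zero_le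
  rcases eq_or_ne (ρ B) 0 with hB0 | hB0
  · rw [hB0, ENNReal.zero_rpow_of_pos ht, mul_zero, mul_zero]; exact zero_le
  have hqA : q * ρ A < ρ A := by
    conv_rhs => rw [← one_mul (ρ A)]
    exact (ENNReal.mul_lt_mul_iff_left hA0 (measure_ne_top ρ A)).2 hq1
  have hqB : q * ρ B < ρ B := by
    conv_rhs => rw [← one_mul (ρ B)]
    exact (ENNReal.mul_lt_mul_iff_left hB0 (measure_ne_top ρ B)).2 hq1
  obtain ⟨K, hKA, hKc, hKgt⟩ := hAm.exists_lt_isCompact hqA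
  obtain ⟨L, hLB, hLc, hLgt⟩ := hBm.exists_lt_isCompact hqB
  have hq_ne_top : q ≠ ∞ := (lt_of_lt_of_le hq1 le_top).ne
  have hqst : q ^ s * q ^ t = q := by
    rw [← ENNReal.rpow_add _ _ hq0 hq_ne_top, hst, ENNReal.rpow_one]
  calc q * (ρ A ^ s * ρ B ^ t) = (q * ρ A) ^ s * (q * ρ B) ^ t := by
        rw [ENNReal.mul_rpow_of_nonneg _ _ hs.le, ENNReal.mul_rpow_of_nonneg _ _ ht.le,
          mul_mul_mul_comm, hqst]
    _ ≤ ρ K ^ s * ρ L ^ t :=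
        mul_le_mul' (ENNReal.rpow_le_rpow hKgt.le hs.le) (ENNReal.rpow_le_rpow hLgt.le ht.le)
    _ ≤ ρ (s • K + t • L) := hBM hKc hLc
    _ ≤ ρ T := measure_mono (hincl K L hKA hLB)

/-- the bounded case -/
lemma bounded_case (ρ : Measure E) [IsFiniteMeasure ρ]
    {s t : ℝ} (hs : 0 < s) (ht : 0 < t) (hst : s + t = 1)
    (hBM : ∀ {K L : Set E}, IsCompact K → IsCompact L → ρ K ^ s * ρ L ^ t ≤ ρ (s • K + t • L))
    {N : ℝ} (hN : 0 < N)
    {a b c : E → ℝ≥0∞} (ma : Measurable a) (mb : Measurable b) (mc : Measurable c)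
    (haN : ∀ x, a x ≤ ENNReal.ofReal N) (hbN : ∀ x, b x ≤ ENNReal.ofReal N)
    (hcN : ∀ x, c x ≤ ENNReal.ofReal N)
    (hyp : ∀ x y, b x ^ s * c y ^ t ≤ a (s • x + t • y)) :
    (∫⁻ x, b x ∂ρ) ^ s * (∫⁻ x, c x ∂ρ) ^ t ≤ ∫⁻ x, a x ∂ρ := by
  set fb : ℝ → ℝ≥0∞ := fun u => ρ {x | ENNReal.ofReal u < b x} with hfb
  set fc : ℝ → ℝ≥0∞ := fun u => ρ {x | ENNReal.ofReal u < c x} with hfc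
  set fa : ℝ → ℝ≥0∞ := fun u => ρ {x | ENNReal.ofReal u < a x} with hfa
  have hfb_anti : Antitone fb := fun u v huv =>
    measure_mono (fun x hx => lt_of_le_of_lt (ENNReal.ofReal_le_ofReal huv) hx)
  have hfc_anti : Antitone fc := fun u v huv =>
    measure_mono (fun x hx => lt_of_le_of_lt (ENNReal.ofReal_le_ofReal huv) hx)
  have hfa_anti : Antitone fa := fun u v huv =>
    measure_mono (fun x hx => lt_of_le_of_lt (ENNReal.ofReal_le_ofReal huv) hx)
  set F : ℝ → ℝ≥0∞ := fun x => ENNReal.ofReal (Real.exp x) * fb (Real.exp x) with hF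
  set G : ℝ → ℝ≥0∞ := fun x => ENNReal.ofReal (Real.exp x) * fc (Real.exp x) with hG
  set H : ℝ → ℝ≥0∞ := fun x => ENNReal.ofReal (Real.exp x) * fa (Real.exp x) with hH
  have hexpm : Measurable Real.exp := Real.continuous_exp.measurable
  have mF : Measurable F :=
    (ENNReal.measurable_ofReal.comp hexpm).mul (hfb_anti.measurable.comp hexpm)
  have mG : Measurable G :=
    (ENNReal.measurable_ofReal.comp hexpm).mul (hfc_anti.measurable.comp hexpm)
  have mH : Measurable H :=
    (ENNReal.measurable_ofReal.comp hexpm).mul (hfa_anti.measurable.comp hexpm)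
  set C := ρ univ with hC
  have hCtop : C ≠ ∞ := measure_ne_top ρ _
  have hFle : ∀ x, F x ≤ C * ENNReal.ofReal (Real.exp x) := fun x => by
    rw [mul_comm]
    show ENNReal.ofReal (Real.exp x) * fb (Real.exp x) ≤ ENNReal.ofReal (Real.exp x) * C
    exact mul_le_mul_right (measure_mono (subset_univ _)) _
  have hGle : ∀ x, G x ≤ C * ENNReal.ofReal (Real.exp x) := fun x => by
    rw [mul_comm]
    show ENNReal.ofReal (Real.exp x) * fc (Real.exp x) ≤ ENNReal.ofReal (Real.exp x) * C
    exact mul_le_mul_right (measure_mono (subset_univ _)) _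
  have hHle : ∀ x, H x ≤ C * ENNReal.ofReal (Real.exp x) := fun x => by
    rw [mul_comm]
    show ENNReal.ofReal (Real.exp x) * fa (Real.exp x) ≤ ENNReal.ofReal (Real.exp x) * C
    exact mul_le_mul_right (measure_mono (subset_univ _)) _
  -- support conditions
  have hsupp : ∀ (φ : E → ℝ≥0∞), (∀ x, φ x ≤ ENNReal.ofReal N) →
      ∀ x : ℝ, Real.log N ≤ x → ρ {y | ENNReal.ofReal (Real.exp x) < φ y} = 0 := by
    intro φ hφ x hx
    have hNe : N ≤ Real.exp x := by
      calc N = Real.exp (Real.log N) := (Real.exp_log hN).symm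
        _ ≤ Real.exp x := Real.exp_le_exp.2 hx
    have : {y | ENNReal.ofReal (Real.exp x) < φ y} = ∅ := by
      refine eq_empty_iff_forall_notMem.2 fun y hy => ?_
      exact absurd hy (not_lt.2 (le_trans (hφ y) (ENNReal.ofReal_le_ofReal hNe)))
    rw [this, measure_empty]
  have hFR : ∀ x, Real.log N ≤ x → F x = 0 := fun x hx => by
    show ENNReal.ofReal (Real.exp x) * fb (Real.exp x) = 0
    rw [show fb (Real.exp x) = 0 from hsupp b hbN x hx, mul_zero]
  have hGR : ∀ x, Real.log N ≤ x → G x = 0 := fun x hx => by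
    show ENNReal.ofReal (Real.exp x) * fc (Real.exp x) = 0
    rw [show fc (Real.exp x) = 0 from hsupp c hcN x hx, mul_zero]
  -- 1-D pointwise hypothesis
  have hyp1 : ∀ x y : ℝ, F x ^ s * G y ^ t ≤ H (s * x + t * y) := by
    intro x y
    have hstep := step2 ρ hs ht hst hBM ma mb mc hyp (Real.exp_pos x) (Real.exp_pos y)
    have hexp : Real.exp x ^ s * Real.exp y ^ t = Real.exp (s * x + t * y) := by
      rw [Real.exp_add, mul_comm s x, mul_comm t y, Real.exp_mul, Real.exp_mul]
    have hofReal : (ENNReal.ofReal (Real.exp x)) ^ s * (ENNReal.ofReal (Real.exp y)) ^ t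
        = ENNReal.ofReal (Real.exp (s * x + t * y)) := by
      rw [ENNReal.ofReal_rpow_of_pos (Real.exp_pos x), ENNReal.ofReal_rpow_of_pos (Real.exp_pos y),
        ← ENNReal.ofReal_mul (Real.rpow_nonneg (Real.exp_pos x).le s), hexp]
    calc F x ^ s * G y ^ t
        = (ENNReal.ofReal (Real.exp x) * fb (Real.exp x)) ^ s
            * (ENNReal.ofReal (Real.exp y) * fc (Real.exp y)) ^ t := rfl
      _ = ((ENNReal.ofReal (Real.exp x)) ^ s * (ENNReal.ofReal (Real.exp y)) ^ t)
            * (fb (Real.exp x) ^ s * fc (Real.exp y) ^ t) := by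
          rw [ENNReal.mul_rpow_of_nonneg _ _ hs.le, ENNReal.mul_rpow_of_nonneg _ _ ht.le]
          ring
      _ ≤ ENNReal.ofReal (Real.exp (s * x + t * y)) * fa (Real.exp x ^ s * Real.exp y ^ t) := by
          rw [hofReal]
          exact mul_le_mul_right hstep _
      _ = H (s * x + t * y) := by
          show _ = ENNReal.ofReal (Real.exp (s * x + t * y)) * fa (Real.exp (s * x + t * y))
          rw [hexp]
  -- layer cake identifications
  have hbfin : ∀ x, b x ≠ ∞ := fun x => (lt_of_le_of_lt (hbN x) ENNReal.ofReal_lt_top).ne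
  have hcfin : ∀ x, c x ≠ ∞ := fun x => (lt_of_le_of_lt (hcN x) ENNReal.ofReal_lt_top).ne
  have hafin : ∀ x, a x ≠ ∞ := fun x => (lt_of_le_of_lt (haN x) ENNReal.ofReal_lt_top).ne
  have hb_eq : ∫⁻ x, b x ∂ρ = ∫⁻ x, F x := by
    rw [layercake_ennreal ρ mb hbfin]
    exact lintegral_Ioi_eq_exp fb
  have hc_eq : ∫⁻ x, c x ∂ρ = ∫⁻ x, G x := by
    rw [layercake_ennreal ρ mc hcfin]
    exact lintegral_Ioi_eq_exp fc
  have ha_eq : ∫⁻ x, a x ∂ρ = ∫⁻ x, H x := by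
    rw [layercake_ennreal ρ ma hafin]
    exact lintegral_Ioi_eq_exp fa
  rw [hb_eq, hc_eq, ha_eq]
  exact oneDimPL hs ht hst mF mG mH hCtop hFle hGle hHle hFR hGR hyp1


end Helpers

/-- If a finite measure satisfies the Prékopa–Leindler property
(for continuous compactly supported test functions), then it satisfies it for
nonnegative Borel test functions as well. -/
theorem prekopaLeindler_borel_of_continuous {d : ℕ}
    (ρ : Measure (EuclideanSpace ℝ (Fin d))) [IsFiniteMeasure ρ]
    (h : PrekopaLeindler ρ) :
    ∀ s t : ℝ, 0 ≤ s → 0 ≤ t → s + t = 1 →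
      ∀ a b c : EuclideanSpace ℝ (Fin d) → ℝ≥0∞,
        Measurable a → Measurable b → Measurable c →
        (∀ x y, b x ^ s * c y ^ t ≤ a (s • x + t • y)) →
        (∫⁻ x, b x ∂ρ) ^ s * (∫⁻ x, c x ∂ρ) ^ t ≤ ∫⁻ x, a x ∂ρ := by
  intro s t hs0 ht0 hst a b c ma mb mc hyp
  -- degenerate cases
  rcases hs0.eq_or_lt with rfl | hs
  · have ht1 : t = 1 := by linarith
    subst ht1
    simp only [ENNReal.rpow_zero, one_mul, ENNReal.rpow_one]
    refine lintegral_mono fun y => ?_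
    have := hyp y y
    simpa [ENNReal.rpow_zero, ENNReal.rpow_one] using this
  rcases ht0.eq_or_lt with rfl | ht
  · have hs1 : s = 1 := by linarith
    subst hs1
    simp only [ENNReal.rpow_zero, mul_one, ENNReal.rpow_one]
    refine lintegral_mono fun x => ?_
    have := hyp x x
    simpa [ENNReal.rpow_zero, ENNReal.rpow_one] using this
  -- main case: truncate
  set bn : ℕ → _ := fun (n : ℕ) (x : EuclideanSpace ℝ (Fin d)) =>
    min (b x) (ENNReal.ofReal ((n:ℝ)+1)) with hbn
  set cn : ℕ → _ := fun (n : ℕ) (x : EuclideanSpace ℝ (Fin d)) =>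
    min (c x) (ENNReal.ofReal ((n:ℝ)+1)) with hcn
  set an : ℕ → _ := fun (n : ℕ) (x : EuclideanSpace ℝ (Fin d)) =>
    min (a x) (ENNReal.ofReal ((n:ℝ)+1)) with han
  have hofR_mono : ∀ {n m : ℕ}, n ≤ m →
      ENNReal.ofReal ((n:ℝ)+1) ≤ ENNReal.ofReal ((m:ℝ)+1) := fun {n m} hnm =>
    ENNReal.ofReal_le_ofReal (by
      have : (n:ℝ) ≤ (m:ℝ) := Nat.cast_le.2 hnm
      linarith)
  have hbn_mono : ∀ x, Monotone (fun n => bn n x) := fun x n m hnm =>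
    min_le_min le_rfl (hofR_mono hnm)
  have hcn_mono : ∀ x, Monotone (fun n => cn n x) := fun x n m hnm =>
    min_le_min le_rfl (hofR_mono hnm)
  -- sup of truncations
  have hsup : ∀ (φ : EuclideanSpace ℝ (Fin d) → ℝ≥0∞) (x),
      (⨆ n : ℕ, min (φ x) (ENNReal.ofReal ((n:ℝ)+1))) = φ x := by
    intro φ x
    apply le_antisymm (iSup_le fun n => min_le_left _ _)
    rcases eq_or_ne (φ x) ∞ with hx | hx
    · have h1 : (⨆ n : ℕ, (n : ℝ≥0∞)) ≤ ⨆ n : ℕ, min (φ x) (ENNReal.ofReal ((n:ℝ)+1)) := by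
        refine iSup_mono fun n => le_min (le_trans le_top hx.ge) ?_
        calc (n : ℝ≥0∞) = ENNReal.ofReal (n:ℝ) := (ENNReal.ofReal_natCast n).symm
          _ ≤ ENNReal.ofReal ((n:ℝ)+1) := ENNReal.ofReal_le_ofReal (by linarith)
      calc φ x = ⊤ := hx
        _ = ⨆ n : ℕ, (n : ℝ≥0∞) := ENNReal.iSup_natCast.symm
        _ ≤ ⨆ n : ℕ, min (φ x) (ENNReal.ofReal ((n:ℝ)+1)) := h1
    · obtain ⟨n, hn⟩ : ∃ n : ℕ, (φ x).toReal ≤ (n:ℝ)+1 :=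
        ⟨⌈(φ x).toReal⌉₊, le_trans (Nat.le_ceil _) (by linarith)⟩
      have : φ x ≤ ENNReal.ofReal ((n:ℝ)+1) := by
        rw [← ENNReal.ofReal_toReal hx]
        exact ENNReal.ofReal_le_ofReal hn
      exact le_trans (le_of_eq (min_eq_left this).symm)
        (le_iSup (fun n : ℕ => min (φ x) (ENNReal.ofReal ((n:ℝ)+1))) n)
  -- measurability of truncations
  have mbn : ∀ n, Measurable (bn n) := fun n => mb.min measurable_const
  have mcn : ∀ n, Measurable (cn n) := fun n => mc.min measurable_const
  have man : ∀ n, Measurable (an n) := fun n => ma.min measurable_const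
  -- truncated pointwise hypothesis
  have hyp_n : ∀ n : ℕ, ∀ x y, bn n x ^ s * cn n y ^ t ≤ an n (s • x + t • y) := by
    intro n x y
    have hne0 : ENNReal.ofReal ((n:ℝ)+1) ≠ 0 := (ENNReal.ofReal_pos.2 (by positivity)).ne'
    refine le_min ?_ ?_
    · exact le_trans (mul_le_mul' (ENNReal.rpow_le_rpow (min_le_left _ _) hs.le)
        (ENNReal.rpow_le_rpow (min_le_left _ _) ht.le)) (hyp x y)
    · calc bn n x ^ s * cn n y ^ t
          ≤ ENNReal.ofReal ((n:ℝ)+1) ^ s * ENNReal.ofReal ((n:ℝ)+1) ^ t :=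
            mul_le_mul' (ENNReal.rpow_le_rpow (min_le_right _ _) hs.le)
              (ENNReal.rpow_le_rpow (min_le_right _ _) ht.le)
        _ = ENNReal.ofReal ((n:ℝ)+1) := by
            rw [← ENNReal.rpow_add _ _ hne0 ENNReal.ofReal_ne_top, hst, ENNReal.rpow_one]
  -- bounded case applied to each truncation
  have key_n : ∀ n : ℕ, (∫⁻ x, bn n x ∂ρ) ^ s * (∫⁻ x, cn n x ∂ρ) ^ t ≤ ∫⁻ x, a x ∂ρ := by
    intro n
    refine le_trans (bounded_case ρ hs ht hst
      (fun {K L} hK hL => step1 ρ h hs ht hst hK hL)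
      (N := (n:ℝ)+1) (by positivity) (man n) (mbn n) (mcn n)
      (fun x => min_le_right _ _) (fun x => min_le_right _ _) (fun x => min_le_right _ _)
      (hyp_n n)) (lintegral_mono fun x => min_le_left _ _)
  -- pass to the limit
  have hb_sup : (⨆ n, ∫⁻ x, bn n x ∂ρ) = ∫⁻ x, b x ∂ρ := by
    rw [← lintegral_iSup mbn (fun n m hnm x => hbn_mono x hnm)]
    exact lintegral_congr (fun x => hsup b x)
  have hc_sup : (⨆ n, ∫⁻ x, cn n x ∂ρ) = ∫⁻ x, c x ∂ρ := by
    rw [← lintegral_iSup mcn (fun n m hnm x => hcn_mono x hnm)]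
    exact lintegral_congr (fun x => hsup c x)
  rw [← hb_sup, ← hc_sup]
  exact rpow_mul_le_of_forall hs ht
    (fun n m hnm => lintegral_mono fun x => hbn_mono x hnm)
    (fun n m hnm => lintegral_mono fun x => hcn_mono x hnm) key_n
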